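/- Let α = (σ̂ ‖ τ̂) be an n-simplex of χ²(Δⁿ), where σ̂ = (A_1|…|A_k) and τ̂ = (B_1|…|B_m) are ordered set partitions of [n]. For x ∈ [n] with x ∈ B_l, the vertex of α colored x is internal if and only if A_k ∩ (B_1∪…∪B_l) ≠ ∅. In particular: all n+1 vertices of α are internal if and only if A_k ∩ B_1 ≠ ∅; and if A_k ∩ B_1 = ∅ and q is the largest index such that A_k ∩ B_i = ∅ for all 1 ≤ i ≤ q, then the boundary (non-internal) vertices of α are precisely those colored by elements of B_1∪…∪B_q. -/

import Mathlib

open Finset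

/-- union of a list of finsets -/
def lunion {α : Type*} [DecidableEq α] (L : List (Finset α)) : Finset α := L.foldr (· ∪ ·) ∅

/-- `IsOSP A L` : `L` is an ordered set partition of the finite set `A`. -/
def IsOSP {α : Type*} [DecidableEq α] (A : Finset α) (L : List (Finset α)) : Prop :=
  (∀ B ∈ L, B.Nonempty) ∧ L.Pairwise (fun B C => Disjoint B C) ∧ lunion L = A

/-- `seenBlk L x` = `A_1 ∪ … ∪ A_{i(x)}`, the union of the blocks of `L` up to and
including the block containing `x`. -/
def seenBlk {α : Type*} [DecidableEq α] : List (Finset α) → α → Finset α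
  | [], _ => ∅
  | A :: rest, x => if x ∈ A then A else A ∪ seenBlk rest x

/-- rank (1-based position in the increasing order) of `x` in the finset `S`. -/
def rankIn (S : Finset ℕ) (x : ℕ) : ℕ := (S.filter (fun y => y ≤ x)).card

/-- the set `F(σ)` of flippable colors, for an ordered set partition of `[n] = {0,…,n}` -/
def Fset (n : ℕ) (L : List (Finset ℕ)) : Finset ℕ :=
  match L.getLast? with
  | some A => if A.card = 1 then Finset.range (n+1) \ A else Finset.range (n+1)
  | none => Finset.range (n+1)

/-- the flip `F(σ,x)` of an ordered set partition with respect to the color `x` -/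
def flipOSP (x : ℕ) : List (Finset ℕ) → List (Finset ℕ)
  | [] => []
  | A :: rest =>
    if x ∈ A then
      if 2 ≤ A.card then {x} :: A.erase x :: rest
      else
        match rest with
        | [] => [A]
        | B :: rest' => insert x B :: rest'
    else A :: flipOSP x rest

def levelAux : List ℕ → List (Finset ℕ) → Option ℕ
  | [], _ => none
  | _ :: _, [] => none
  | x :: xs, A :: As => if A = {x} then levelAux xs As else some x

/-- `levelFn Σ σ` = `level(σ,Σ)` (as an `Option`; `none` = undefined). -/
def levelFn (Sig : List ℕ) (L : List (Finset ℕ)) : Option ℕ :=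
  levelAux Sig.reverse L.reverse

/-- ordered set partitions of `[n] = {0,…,n}` -/
def OSPn (n : ℕ) : Type := {L : List (Finset ℕ) // IsOSP (Finset.range (n+1)) L}

/-- the graph `Γ_n`: vertices are the ordered set partitions of `[n]`, with `σ` and
`F(σ,x)` joined by an edge for every `x ∈ F(σ)`. -/
def Gamma (n : ℕ) : SimpleGraph (OSPn n) where
  Adj σ τ := σ ≠ τ ∧
    ((∃ x ∈ Fset n σ.1, τ.1 = flipOSP x σ.1) ∨ (∃ x ∈ Fset n τ.1, σ.1 = flipOSP x τ.1))
  symm := ⟨fun σ τ h => ⟨h.1.symm, h.2.symm⟩⟩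
  loopless := ⟨fun σ h => h.1 rfl⟩

/-- a matching: a set of edges of `G`, no two of which share a vertex -/
def IsMatchingSet {V : Type*} (G : SimpleGraph V) (M : Set (Sym2 V)) : Prop :=
  (∀ e ∈ M, e ∈ G.edgeSet) ∧ ∀ e ∈ M, ∀ f ∈ M, ∀ v : V, v ∈ e → v ∈ f → e = f

/-- a vertex is critical w.r.t. `M` if it lies in no edge of `M` -/
def CriticalVx {V : Type*} (M : Set (Sym2 V)) (v : V) : Prop := ∀ e ∈ M, v ∉ e

/-- the standard matching `M_Σ`, as a set of edges of `Γ_n` -/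
def MSigma (n : ℕ) (Sig : List ℕ) : Set (Sym2 (OSPn n)) :=
  {e | ∃ σ τ : OSPn n, ∃ x, levelFn Sig σ.1 = some x ∧ τ.1 = flipOSP x σ.1 ∧ e = s(σ, τ)}

/-- a list of edges is alternating w.r.t. `M` -/
def Alternates {V : Type*} (M : Set (Sym2 V)) (es : List (Sym2 V)) : Prop :=
  es.Chain' (fun e f => e ∈ M ↔ f ∉ M)

def IsProperlyAlternating {V : Type*} {G : SimpleGraph V} (M : Set (Sym2 V)) {u v : V}
    (p : G.Walk u v) : Prop :=
  Alternates M p.edges ∧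
  (∀ e, p.edges.head? = some e → e ∉ M → CriticalVx M u) ∧
  (∀ e, p.edges.getLast? = some e → e ∉ M → CriticalVx M v)

def IsSemiAugmenting {V : Type*} {G : SimpleGraph V} (M : Set (Sym2 V)) {u v : V}
    (p : G.Walk u v) : Prop :=
  IsProperlyAlternating M p ∧
  (∃ e, p.edges.head? = some e ∧ e ∈ M) ∧ (∃ e, p.edges.getLast? = some e ∧ e ∉ M)

def IsNonAugmenting {V : Type*} {G : SimpleGraph V} (M : Set (Sym2 V)) {u v : V}
    (p : G.Walk u v) : Prop :=
  Alternates M p.edges ∧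
  (∃ e, p.edges.head? = some e ∧ e ∈ M) ∧ (∃ e, p.edges.getLast? = some e ∧ e ∈ M)

def IsWeaklySemiAugmenting {V : Type*} {G : SimpleGraph V} (M : Set (Sym2 V)) {u v : V}
    (p : G.Walk u v) : Prop :=
  Alternates M p.edges ∧
  (p.edges = [] ∨
    ((∃ e, p.edges.head? = some e ∧ e ∈ M) ∧ (∃ e, p.edges.getLast? = some e ∧ e ∉ M)))

/-- a partial ordered set partition, as a list of pairs of blocks `(A_i, B_i)` -/
abbrev RawPOSP := List (Finset ℕ × Finset ℕ)

def carrierP (σ : RawPOSP) : Finset ℕ := (σ.map Prod.fst).foldr (· ∪ ·) ∅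
def colorsP (σ : RawPOSP) : Finset ℕ := (σ.map Prod.snd).foldr (· ∪ ·) ∅

/-- `σ` is a partial ordered set partition of `[n] = {0,…,n}` -/
def IsPOSP (n : ℕ) (σ : RawPOSP) : Prop :=
  σ ≠ [] ∧ (∀ p ∈ σ, p.2.Nonempty ∧ p.2 ⊆ p.1 ∧ p.1 ⊆ Finset.range (n+1)) ∧
  (σ.map Prod.fst).Pairwise (fun A B => Disjoint A B)

/-- view an ordered set partition as a partial one, with `B_i = A_i` -/
def toPairs (L : List (Finset ℕ)) : RawPOSP := L.map (fun A => (A, A))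

def dlAux (S : Finset ℕ) : Finset ℕ → RawPOSP → RawPOSP
  | _, [] => []
  | acc, (A, B) :: rest =>
    if B ⊆ S then dlAux S (acc ∪ A) rest
    else (acc ∪ A, B \ S) :: dlAux S ∅ rest

/-- the deletion `dl(σ, S)` -/
def dl (σ : RawPOSP) (S : Finset ℕ) : RawPOSP := dlAux S ∅ σ

/-- `D(σ, S)` = `A_i ∪ … ∪ A_t` for the minimal `i` with `B_i ∪ … ∪ B_t ⊆ S`, else `∅` -/
def Dfun (S : Finset ℕ) : RawPOSP → Finset ℕ
  | [] => ∅
  | b :: rest => if colorsP (b :: rest) ⊆ S then carrierP (b :: rest) else Dfun S rest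

def nodesAux : Finset ℕ → RawPOSP → Finset (Finset ℕ × ℕ)
  | _, [] => ∅
  | acc, (A, B) :: rest => B.image (fun x => (acc ∪ A, x)) ∪ nodesAux (acc ∪ A) rest

/-- the node set `V(σ)` of a partial ordered set partition -/
def nodesP (σ : RawPOSP) : Finset (Finset ℕ × ℕ) := nodesAux ∅ σ

/-- an ordered set partition of the whole of `[n]`, viewed as a partial one -/
def IsFullOSP (n : ℕ) (σ : RawPOSP) : Prop :=
  IsPOSP n σ ∧ carrierP σ = Finset.range (n+1) ∧ ∀ p ∈ σ, p.2 = p.1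

/-- simplices of the standard chromatic subdivision `χ(Δⁿ)` -/
def IsSimplexChi (n : ℕ) (W : Finset (Finset ℕ × ℕ)) : Prop :=
  ∃ σ : RawPOSP, IsFullOSP n σ ∧ W ⊆ nodesP σ

/-- a linked tuple of partial ordered set partitions -/
def Linked (T : List RawPOSP) : Prop := T.Chain' (fun σ τ => colorsP σ = carrierP τ)

/-- vertices of `χ^d(Δⁿ)`: linked `d`-tuples whose last entry has a singleton color set -/
def IsVertexChi (n d : ℕ) (v : List RawPOSP) : Prop :=
  v.length = d ∧ (∀ σ ∈ v, IsPOSP n σ) ∧ Linked v ∧ (colorsP (v.getLastD [])).card = 1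

/-- the `n`-simplices of `χ^d(Δⁿ)`: linked `d`-tuples of ordered set partitions of `[n]` -/
def IsTopSimplexChi (n d : ℕ) (T : List RawPOSP) : Prop :=
  T.length = d ∧ Linked T ∧
  ∀ σ ∈ T, IsPOSP n σ ∧ carrierP σ = Finset.range (n+1) ∧ ∀ p ∈ σ, p.2 = p.1

def faceAux : Finset ℕ → List RawPOSP → List RawPOSP
  | _, [] => []
  | S, σ :: rest => dl σ S :: faceAux (Dfun S σ) rest

/-- the face of the simplex `T` of `χ^d(Δⁿ)` determined by `S_d = S`:
`(dl(σ_1,S_1),…,dl(σ_d,S_d))` with `S_i = D(σ_{i+1},S_{i+1})`. -/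
def faceT (T : List RawPOSP) (S : Finset ℕ) : List RawPOSP := (faceAux S T.reverse).reverse

/-- the vertex of the `n`-simplex `T` colored `x` -/
def vertexOf (T : List RawPOSP) (x : ℕ) : List RawPOSP :=
  faceT T ((colorsP (T.getLastD [])) \ {x})

/-- relabel all elements by `f` -/
def relabel (f : ℕ → ℕ) (T : List RawPOSP) : List RawPOSP :=
  T.map (fun σ => σ.map (fun p => (p.1.image f, p.2.image f)))

/-- the unique order preserving bijection `I → J` (extended by the identity) -/
noncomputable def oMap (I J : Finset ℕ) (h : I.card = J.card) (x : ℕ) : ℕ :=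
  if hx : x ∈ I then ((J.orderIsoOfFin h.symm) ((I.orderIsoOfFin rfl).symm ⟨x, hx⟩) : ℕ)
  else x

/-- a compliant binary labeling of the vertices of `χ^d(Δⁿ)` -/
def Compliant (n d : ℕ) (lab : List RawPOSP → Bool) : Prop :=
  ∀ I J : Finset ℕ, I ⊆ Finset.range (n+1) → J ⊆ Finset.range (n+1) →
    ∀ h : I.card = J.card, ∀ v : List RawPOSP, IsVertexChi n d v →
      carrierP v.headI ⊆ I → lab (relabel (oMap I J h) v) = lab v

/-- the number of ordered set partitions of `[n] = {0,…,n}` -/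
noncomputable def fOSP (n : ℕ) : ℕ :=
  Nat.card {L : List (Finset ℕ) // IsOSP (Finset.range (n+1)) L}

/-- membership in the vertex set of `Γ_n(V)` -/
def InGammaV (V : Finset ℕ) (L : List (Finset ℕ)) : Prop :=
  ∃ A rest, L = A :: rest ∧ ¬ A ⊆ V

/-- a prefix in `V`: a tuple of nonempty pairwise disjoint subsets of `V` -/
def IsPrefixIn {α : Type*} [DecidableEq α] (V : Finset α) (P : List (Finset α)) : Prop :=
  (∀ A ∈ P, A.Nonempty ∧ A ⊆ V) ∧ P.Pairwise (fun A B => Disjoint A B)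

/-- membership in the vertex set of `Γ_n(V,𝒜)` -/
def InGammaVA (V : Finset ℕ) (P : List (Finset ℕ)) (L : List (Finset ℕ)) : Prop :=
  ∃ A rest, L = P ++ A :: rest ∧ ¬ A ⊆ V

/-- conducting bipartite graph of the first type -/
def ConductingFirst {V : Type*} (G : SimpleGraph V) (A B : Set V) : Prop :=
  A.ncard = B.ncard + 1 ∧
  ∀ v ∈ A, ∃ M : Set (Sym2 V), IsMatchingSet G M ∧ ∀ u, CriticalVx M u ↔ u = v

/-- conducting bipartite graph of the second type -/
def ConductingSecond {V : Type*} (G : SimpleGraph V) (A B : Set V) : Prop :=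
  A.ncard = B.ncard ∧
  ∀ v ∈ A, ∀ w ∈ B, ∃ M : Set (Sym2 V), IsMatchingSet G M ∧
    ∀ u, CriticalVx M u ↔ (u = v ∨ u = w)

/-- the vertex of the `n`-simplex `(As ‖ Bs)` of `χ²(Δⁿ)` colored `x` is internal -/
def InternalVx (n : ℕ) (As Bs : List (Finset ℕ)) (x : ℕ) : Prop :=
  carrierP (dl (toPairs As) (Finset.range (n+1) \ seenBlk Bs x)) = Finset.range (n+1)

lemma lunion_cons {α : Type*} [DecidableEq α] (A : Finset α) (L : List (Finset α)) :
    lunion (A :: L) = A ∪ lunion L := rfl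

lemma mem_lunion {α : Type*} [DecidableEq α] {a : α} {L : List (Finset α)} :
    a ∈ lunion L ↔ ∃ B ∈ L, a ∈ B := by
  induction L with
  | nil => simp [lunion]
  | cons B L ih => simp [lunion_cons, Finset.mem_union, ih]

lemma subset_lunion {α : Type*} [DecidableEq α] {A : Finset α} {L : List (Finset α)}
    (h : A ∈ L) : A ⊆ lunion L := fun a ha => mem_lunion.2 ⟨A, h, ha⟩

lemma carrierP_cons (p : Finset ℕ × Finset ℕ) (L : RawPOSP) :
    carrierP (p :: L) = p.1 ∪ carrierP L := rfl

lemma dlAux_carrier_of_last (S : Finset ℕ) :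
    ∀ (As : List (Finset ℕ)) (acc : Finset ℕ), ¬ (As.getLastD ∅ ⊆ S) →
      carrierP (dlAux S acc (toPairs As)) = acc ∪ lunion As := by
  intro As
  induction As with
  | nil => intro acc h; exact absurd (Finset.empty_subset S) h
  | cons A rest ih =>
    intro acc h
    cases rest with
    | nil =>
      have hA : ¬ A ⊆ S := by simpa using h
      simp [toPairs, dlAux, hA, carrierP_cons, carrierP, lunion]
    | cons B rest' =>
      have h' : ¬ ((B :: rest').getLastD ∅ ⊆ S) := by simpa using h
      by_cases hA : A ⊆ S
      · show carrierP (dlAux S acc ((A,A) :: toPairs (B :: rest'))) = _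
        rw [dlAux, if_pos hA, ih _ h']
        simp [lunion_cons, Finset.union_assoc]
      · show carrierP (dlAux S acc ((A,A) :: toPairs (B :: rest'))) = _
        rw [dlAux, if_neg hA, carrierP_cons, ih _ h']
        simp [lunion_cons, Finset.union_assoc]

lemma dlAux_carrier_subset (S : Finset ℕ) :
    ∀ (As₁ : List (Finset ℕ)) (Ak : Finset ℕ) (acc : Finset ℕ), Ak ⊆ S →
      carrierP (dlAux S acc (toPairs (As₁ ++ [Ak]))) ⊆ acc ∪ lunion As₁ := by
  intro As₁
  induction As₁ with
  | nil =>
    intro Ak acc hAk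
    show carrierP (dlAux S acc [(Ak,Ak)]) ⊆ _
    rw [dlAux, if_pos hAk]
    simp [dlAux, carrierP]
  | cons A rest ih =>
    intro Ak acc hAk
    show carrierP (dlAux S acc ((A,A) :: toPairs (rest ++ [Ak]))) ⊆ _
    by_cases hA : A ⊆ S
    · rw [dlAux, if_pos hA]
      refine (ih Ak _ hAk).trans ?_
      rw [lunion_cons]
      intro a ha; rcases Finset.mem_union.1 ha with h | h
      · rcases Finset.mem_union.1 h with h | h <;> simp [h]
      · simp [h]
    · rw [dlAux, if_neg hA, carrierP_cons]
      intro a ha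
      rcases Finset.mem_union.1 ha with h | h
      · rcases Finset.mem_union.1 h with h | h <;> simp [lunion_cons, h]
      · have := ih Ak ∅ hAk h
        rcases Finset.mem_union.1 this with h | h
        · simp at h
        · simp [lunion_cons, h]

lemma head_subset_seenBlk {α : Type*} [DecidableEq α] (B : Finset α) (rest : List (Finset α))
    (x : α) : B ⊆ seenBlk (B :: rest) x := by
  rw [seenBlk]; split <;> simp

lemma seenBlk_subset_take {α : Type*} [DecidableEq α] :
    ∀ (L : List (Finset α)) (q : ℕ) (x : α), x ∈ lunion (L.take q) →
      seenBlk L x ⊆ lunion (L.take q) := by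
  intro L
  induction L with
  | nil => intro q x hx; simp [seenBlk]
  | cons B rest ih =>
    intro q x hx
    cases q with
    | zero => simp [lunion] at hx
    | succ q =>
      rw [List.take_succ_cons, lunion_cons] at hx ⊢
      rw [seenBlk]
      split
      · exact fun a ha => Finset.mem_union_left _ ha
      · rename_i hxB
        have hx' : x ∈ lunion (rest.take q) := by
          rcases Finset.mem_union.1 hx with h | h
          · exact absurd h hxB
          · exact h
        exact Finset.union_subset_union_right (ih q x hx')

lemma get_subset_seenBlk {α : Type*} [DecidableEq α] :
    ∀ (L : List (Finset α)) (q : ℕ) (h : q < L.length) (x : α),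
      x ∉ lunion (L.take q) → x ∈ lunion L → L.get ⟨q, h⟩ ⊆ seenBlk L x := by
  intro L
  induction L with
  | nil => intro q h; simp at h
  | cons B rest ih =>
    intro q h x hx1 hx2
    cases q with
    | zero => exact head_subset_seenBlk B rest x
    | succ q =>
      rw [List.take_succ_cons, lunion_cons] at hx1
      have hxB : x ∉ B := fun h' => hx1 (Finset.mem_union_left _ h')
      have hx1' : x ∉ lunion (rest.take q) := fun h' => hx1 (Finset.mem_union_right _ h')
      have hx2' : x ∈ lunion rest := by
        rcases Finset.mem_union.1 (by rwa [lunion_cons] at hx2) with h' | h'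
        · exact absurd h' hxB
        · exact h'
      rw [seenBlk, if_neg hxB]
      exact (ih q (Nat.lt_of_succ_lt_succ h) x hx1' hx2').trans
        (Finset.subset_union_right)

lemma internal_iff (n : ℕ) (As Bs : List (Finset ℕ)) (hA : IsOSP (Finset.range (n+1)) As)
    (x : ℕ) : InternalVx n As Bs x ↔ ((As.getLastD ∅) ∩ seenBlk Bs x).Nonempty := by
  obtain ⟨hne0, hdisj, hun⟩ := hA
  have h0 : (0:ℕ) ∈ Finset.range (n+1) := by simp
  have hAne : As ≠ [] := by rintro rfl; rw [← hun] at h0; simp [lunion] at h0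
  set Ak := As.getLast hAne with hAkdef
  have hgD : As.getLastD ∅ = Ak := by
    rw [List.getLastD_eq_getLast?, List.getLast?_eq_getLast hAne]; rfl
  have hsplit : As.dropLast ++ [Ak] = As := List.dropLast_append_getLast hAne
  set T := seenBlk Bs x with hT
  set S := Finset.range (n+1) \ T with hS
  rw [hgD]
  have hAkmem : Ak ∈ As := List.getLast_mem hAne
  constructor
  · intro hI
    by_contra hcon
    have hAkS : Ak ⊆ S := by
      intro a ha
      rw [hS, Finset.mem_sdiff]
      exact ⟨hun ▸ subset_lunion hAkmem ha,
        fun haT => hcon ⟨a, Finset.mem_inter.2 ⟨ha, haT⟩⟩⟩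
    have hsub := dlAux_carrier_subset S As.dropLast Ak ∅ hAkS
    rw [hsplit] at hsub
    unfold InternalVx dl at hI
    rw [hI] at hsub
    obtain ⟨a, haAk⟩ := hne0 Ak hAkmem
    have haR : a ∈ Finset.range (n+1) := hun ▸ subset_lunion hAkmem haAk
    have hmem := hsub haR
    rw [Finset.empty_union] at hmem
    obtain ⟨B, hBmem, haB⟩ := mem_lunion.1 hmem
    have hd : Disjoint B Ak := by
      have hp := (List.pairwise_append.1 (hsplit ▸ hdisj)).2.2
      exact hp B hBmem Ak (by simp)
    exact Finset.disjoint_left.mp hd haB haAk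
  · rintro ⟨a, ha⟩
    rw [Finset.mem_inter] at ha
    have hnotsub : ¬ (As.getLastD ∅ ⊆ S) := by
      rw [hgD]; intro hsub
      have h2 := hsub ha.1
      rw [hS, Finset.mem_sdiff] at h2
      exact h2.2 ha.2
    unfold InternalVx dl
    rw [dlAux_carrier_of_last S As ∅ hnotsub, Finset.empty_union, hun]

/-- Characterization of the internal vertices of an `n`-simplex `(As ‖ Bs)` of `χ²(Δⁿ)`:
the vertex colored `x ∈ B_l` is internal iff `A_k ∩ (B_1∪…∪B_l) ≠ ∅`; all vertices are
internal iff `A_k ∩ B_1 ≠ ∅`; and if `q` is the largest index with `A_k ∩ B_i = ∅` for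
all `i ≤ q`, the boundary vertices are exactly those colored by `B_1∪…∪B_q`. -/
theorem statement14 (n : ℕ) (As Bs : List (Finset ℕ))
    (hA : IsOSP (Finset.range (n + 1)) As) (hB : IsOSP (Finset.range (n + 1)) Bs) :
    (∀ x ∈ Finset.range (n + 1),
      InternalVx n As Bs x ↔ ((As.getLastD ∅) ∩ seenBlk Bs x).Nonempty) ∧
    ((∀ x ∈ Finset.range (n + 1), InternalVx n As Bs x) ↔
      ((As.getLastD ∅) ∩ Bs.headI).Nonempty) ∧
    (∀ q : ℕ, 1 ≤ q → q ≤ Bs.length →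
      (∀ B ∈ Bs.take q, Disjoint (As.getLastD ∅) B) →
      (∀ h : q < Bs.length, ¬ Disjoint (As.getLastD ∅) (Bs.get ⟨q, h⟩)) →
      ∀ x ∈ Finset.range (n + 1),
        (¬ InternalVx n As Bs x ↔ x ∈ lunion (Bs.take q))) := by

  have key := fun x => internal_iff n As Bs hA x
  have h0 : (0:ℕ) ∈ Finset.range (n+1) := by simp
  have hBne : Bs ≠ [] := by rintro rfl; rw [← hB.2.2] at h0; simp [lunion] at h0
  refine ⟨fun x _ => key x, ?_, ?_⟩
  · obtain ⟨B₁, rest, rfl⟩ := List.exists_cons_of_ne_nil hBne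
    constructor
    · intro hall
      obtain ⟨x, hxB⟩ := hB.1 B₁ (by simp)
      have hxR : x ∈ Finset.range (n+1) := hB.2.2 ▸ subset_lunion (by simp) hxB
      have hI := (key x).1 (hall x hxR)
      rwa [show seenBlk (B₁ :: rest) x = B₁ by rw [seenBlk, if_pos hxB]] at hI
    · rintro ⟨a, ha⟩ x _
      rw [Finset.mem_inter] at ha
      exact (key x).2 ⟨a, Finset.mem_inter.2
        ⟨ha.1, head_subset_seenBlk B₁ rest x ha.2⟩⟩
  · intro q _ hq2 hdisjq hget x hx
    rw [key x, Finset.not_nonempty_iff_eq_empty]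
    constructor
    · intro hemp
      rcases lt_or_eq_of_le hq2 with h | h
      · by_contra hxnot
        have hsub := get_subset_seenBlk Bs q h x hxnot (by rw [hB.2.2]; exact hx)
        obtain ⟨a, haAk, haB⟩ := Finset.not_disjoint_iff.1 (hget h)
        have : a ∈ (As.getLastD ∅) ∩ seenBlk Bs x :=
          Finset.mem_inter.2 ⟨haAk, hsub haB⟩
        rw [hemp] at this; exact absurd this (Finset.notMem_empty a)
      · rw [h, List.take_length, hB.2.2]; exact hx
    · intro hxin
      have hsub := seenBlk_subset_take Bs q x hxin
      rw [Finset.eq_empty_iff_forall_notMem]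
      intro a ha
      rw [Finset.mem_inter] at ha
      obtain ⟨B, hBmem, haB⟩ := mem_lunion.1 (hsub ha.2)
      exact Finset.disjoint_left.mp (hdisjq B hBmem) ha.1 haB
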